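/- arXiv:1311.4734 — 4 statements merged into one kernel-verified Lean document; each statement's English description precedes it below -/
import Mathlib

section
/- If a_n and a_{n+1} are positive integers of different parity with a_n < a_{n+1}, then the Morse block M_{a_{n+1}} ends with the block \overline{M_{a_n}} (the binary complement of M_{a_n}). -/
open Filter

/-- Metric on Σ₂ = {0,1}^ℕ : d(u,v) = Σ_{i≥1} δ(u_i,v_i)/2^i (coordinates 0-indexed). -/
noncomputable def dist2 (u v : ℕ → Bool) : ℝ :=
  ∑' i : ℕ, if u i = v i then 0 else (1/2)^(i+1)

/-- The shift map. -/
def shift (u : ℕ → Bool) : ℕ → Bool := fun n => u (n + 1)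

/-- Binary complement of a word. -/
def wordCompl (B : List Bool) : List Bool := B.map (fun b => !b)

/-- Morse blocks: M_0 = 0, M_{i+1} = M_i followed by its complement. -/
def morseBlock : ℕ → List Bool
  | 0 => [false]
  | i + 1 => morseBlock i ++ wordCompl (morseBlock i)

/-- The Morse sequence, the limit of the Morse blocks. -/
def morse : ℕ → Bool := fun n => (morseBlock (n + 1)).getD n false

open Classical in
/-- Infinite concatenation of a sequence of (nonempty) blocks. -/
noncomputable def concatSeq (B : ℕ → List Bool) (k : ℕ) : Bool :=
  if h : ∃ n, ∑ i ∈ Finset.range n, (B i).length ≤ k ∧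
      k < ∑ i ∈ Finset.range (n + 1), (B i).length then
    (B h.choose).getD (k - ∑ i ∈ Finset.range h.choose, (B i).length) false
  else false

open Classical in
/-- Lower distributional function. -/
noncomputable def Phi (x y : ℕ → Bool) (δ : ℝ) : ℝ :=
  liminf (fun m : ℕ =>
    (((Finset.Ioo 0 m).filter (fun k => dist2 (shift^[k] x) (shift^[k] y) < δ)).card : ℝ) / m)
    atTop

open Classical in
/-- Upper distributional function. -/
noncomputable def PhiStar (x y : ℕ → Bool) (ε : ℝ) : ℝ :=
  limsup (fun m : ℕ =>
    (((Finset.Ioo 0 m).filter (fun k => dist2 (shift^[k] x) (shift^[k] y) < ε)).card : ℝ) / m)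
    atTop

/-- A Li-Yorke scrambled triple. -/
noncomputable def ScrTriple (x y z : ℕ → Bool) : Prop :=
  x ≠ y ∧ x ≠ z ∧ y ≠ z ∧
  liminf (fun k : ℕ => max (max (dist2 (shift^[k] x) (shift^[k] y))
      (dist2 (shift^[k] x) (shift^[k] z))) (dist2 (shift^[k] y) (shift^[k] z))) atTop = 0 ∧
  0 < limsup (fun k : ℕ => min (min (dist2 (shift^[k] x) (shift^[k] y))
      (dist2 (shift^[k] x) (shift^[k] z))) (dist2 (shift^[k] y) (shift^[k] z))) atTop

/-- Concatenation of Morse blocks M_{a j}, complemented where `e j = true`. -/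
noncomputable def blockPt (a : ℕ → ℕ) (e : ℕ → Bool) : ℕ → Bool :=
  concatSeq (fun j => if e j then wordCompl (morseBlock (a j)) else morseBlock (a j))

/-- A point occurring as in Theorem 2: odd-position blocks fixed, even-position blocks chosen by α. -/
noncomputable def xpt (a : ℕ → ℕ) (α : ℕ → Bool) : ℕ → Bool :=
  blockPt a (fun j => if j % 2 = 0 then α (j / 2) else false)

/-- Cantor set predicate. -/
def IsCantorSet (C : Set (ℕ → Bool)) : Prop :=
  C.Nonempty ∧ IsCompact C ∧ Perfect C ∧ IsTotallyDisconnected C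

/-- The Morse minimal set: orbit closure of the Morse sequence. -/
def morseMinimal : Set (ℕ → Bool) := closure {y | ∃ k : ℕ, y = shift^[k] morse}


lemma wordCompl_compl (l : List Bool) : wordCompl (wordCompl l) = l := by
  simp [wordCompl, List.map_map]
  exact List.map_id'' (by simp) l

lemma suffix_succ (i : ℕ) : wordCompl (morseBlock i) <:+ morseBlock (i + 1) :=
  ⟨morseBlock i, rfl⟩

lemma suffix_two (i : ℕ) : morseBlock i <:+ morseBlock (i + 2) := by
  have h : morseBlock (i + 2) = morseBlock (i + 1) ++ (wordCompl (morseBlock i) ++ morseBlock i) := by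
    show morseBlock (i+1) ++ wordCompl (morseBlock (i+1)) = _
    congr 1
    show wordCompl (morseBlock i ++ wordCompl (morseBlock i)) = _
    rw [show wordCompl (morseBlock i ++ wordCompl (morseBlock i)) =
      wordCompl (morseBlock i) ++ wordCompl (wordCompl (morseBlock i)) from List.map_append,
      wordCompl_compl]
  rw [h, ← List.append_assoc]
  exact List.suffix_append _ _

lemma suffix_odd (a k : ℕ) : wordCompl (morseBlock a) <:+ morseBlock (a + 1 + 2 * k) := by
  induction k with
  | zero => exact suffix_succ a
  | succ n ih =>
    have : a + 1 + 2 * (n + 1) = (a + 1 + 2 * n) + 2 := by ring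
    rw [this]
    exact ih.trans (suffix_two _)

theorem stmt1 (a b : ℕ) (ha : 0 < a) (hab : a < b) (hpar : a % 2 ≠ b % 2) :
    wordCompl (morseBlock a) <:+ morseBlock b := by
  obtain ⟨k, hk⟩ : ∃ k, b = a + 1 + 2 * k := ⟨(b - a - 1) / 2, by omega⟩
  rw [hk]; exact suffix_odd a k
end

section
/- Let {a_i} be a strictly increasing sequence of positive integers such that a_n and n have the same parity for every n ≥ 1. Then the infinite concatenation x = M_{a_1} M_{a_2} M_{a_3} ... is contained in the Morse minimal set M = cl{ m, σ(m), σ²(m), ... }, where m is the Morse sequence. -/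
open Filter

lemma wordCompl_append (A B : List Bool) :
    wordCompl (A ++ B) = wordCompl A ++ wordCompl B := List.map_append

lemma wordCompl_wordCompl (A : List Bool) : wordCompl (wordCompl A) = A := by
  simp [wordCompl, List.map_map, Function.comp_def]

lemma length_wordCompl (A : List Bool) : (wordCompl A).length = A.length :=
  List.length_map _

lemma length_morseBlock (n : ℕ) : (morseBlock n).length = 2 ^ n := by
  induction n with
  | zero => rfl
  | succ n ih => simp [morseBlock, length_wordCompl, ih, pow_succ]; ring

lemma morseBlock_succ (n : ℕ) :
    morseBlock (n + 1) = morseBlock n ++ wordCompl (morseBlock n) := rfl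

lemma morseBlock_prefix {i j : ℕ} (h : i ≤ j) : morseBlock i <+: morseBlock j := by
  induction j with
  | zero => simp_all
  | succ j ih =>
    rcases Nat.lt_or_ge i (j + 1) with h' | h'
    · exact (ih (Nat.lt_succ_iff.mp h')).trans ⟨wordCompl (morseBlock j), rfl⟩
    · have : i = j + 1 := le_antisymm h h'
      subst this; exact List.prefix_rfl

lemma morse_eq (n k : ℕ) (h : k < 2 ^ n) : morse k = (morseBlock n).getD k false := by
  unfold morse
  rcases le_total (k + 1) n with h1 | h1
  · obtain ⟨t, ht⟩ := morseBlock_prefix h1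
    rw [← ht, List.getD_append]
    rw [length_morseBlock]; exact lt_of_lt_of_le (Nat.lt_two_pow_self (n := k)) (Nat.pow_le_pow_right (by norm_num) (Nat.le_succ k))
  · obtain ⟨t, ht⟩ := morseBlock_prefix h1
    rw [← ht, List.getD_append]
    rw [length_morseBlock]; exact h

lemma compl_suffix_two (k : ℕ) :
    wordCompl (morseBlock k) <:+ wordCompl (morseBlock (k + 2)) := by
  refine ⟨wordCompl (morseBlock (k + 1)) ++ morseBlock k, ?_⟩
  rw [show k + 2 = (k+1) + 1 from rfl, morseBlock_succ, wordCompl_append,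
    wordCompl_wordCompl, morseBlock_succ (k+1), morseBlock_succ, wordCompl_append,
    wordCompl_wordCompl, List.append_assoc]
  rw [wordCompl_append, wordCompl_wordCompl]

lemma compl_suffix_aux (k d : ℕ) :
    wordCompl (morseBlock k) <:+ wordCompl (morseBlock (k + 2 * d)) := by
  induction d with
  | zero => simp
  | succ d ih =>
    have h2 := compl_suffix_two (k + 2 * d)
    have : k + 2 * (d + 1) = k + 2 * d + 2 := by ring
    rw [this]
    exact ih.trans h2

lemma compl_suffix {k l : ℕ} (h : k ≤ l) (hp : k % 2 = l % 2) :
    wordCompl (morseBlock k) <:+ wordCompl (morseBlock l) := by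
  obtain ⟨d, rfl⟩ : ∃ d, l = k + 2 * d := ⟨(l - k) / 2, by omega⟩
  exact compl_suffix_aux k d

def Pword (a : ℕ → ℕ) (n : ℕ) : List Bool :=
  (((List.range (n + 1)).map (fun i => morseBlock (a i))).flatten)

lemma Pword_succ (a : ℕ → ℕ) (n : ℕ) :
    Pword a (n + 1) = Pword a n ++ morseBlock (a (n + 1)) := by
  simp [Pword, List.range_succ]

lemma Pword_suffix (a : ℕ → ℕ) (hmono : StrictMono a)
    (hpar : ∀ n, a n % 2 = (n + 1) % 2) (n : ℕ) :
    Pword a n <:+ wordCompl (morseBlock (a n + 1)) := by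
  induction n with
  | zero =>
    refine ⟨wordCompl (morseBlock (a 0)), ?_⟩
    rw [morseBlock_succ, wordCompl_append, wordCompl_wordCompl]
    congr 1
    show (List.map (fun i => morseBlock (a i)) (List.range 1)).flatten = morseBlock (a 0)
    simp [List.range_succ]
  | succ n ih =>
    have hle : a n + 1 ≤ a (n + 1) := hmono (Nat.lt_succ_self n)
    have hp : (a n + 1) % 2 = a (n + 1) % 2 := by
      have h1 := hpar n; have h2 := hpar (n + 1); omega
    have h3 : Pword a n <:+ wordCompl (morseBlock (a (n + 1))) :=
      ih.trans (compl_suffix hle hp)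
    obtain ⟨t, ht⟩ := h3
    refine ⟨t, ?_⟩
    rw [Pword_succ, morseBlock_succ, wordCompl_append, wordCompl_wordCompl,
      ← ht, List.append_assoc]

lemma S_mono (B : ℕ → List Bool) :
    Monotone (fun n => ∑ i ∈ Finset.range n, (B i).length) :=
  fun m n h => Finset.sum_le_sum_of_subset (Finset.range_subset_range.2 h)

lemma flatten_length (B : ℕ → List Bool) (N : ℕ) :
    (((List.range N).map B).flatten).length = ∑ i ∈ Finset.range N, (B i).length := by
  induction N with
  | zero => simp
  | succ N ih => simp [List.range_succ, Finset.sum_range_succ, ih]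

lemma concatSeq_eq_getD (B : ℕ → List Bool) (N k : ℕ)
    (hk : k < ∑ i ∈ Finset.range N, (B i).length) :
    concatSeq B k = (((List.range N).map B).flatten).getD k false := by
  induction N with
  | zero => simp at hk
  | succ N ih =>
    by_cases hk' : k < ∑ i ∈ Finset.range N, (B i).length
    · rw [ih hk', List.range_succ]
      rw [List.map_append, List.flatten_append]
      rw [List.getD_append]
      rw [flatten_length]; exact hk'
    · push_neg at hk'
      have hex : ∃ n, ∑ i ∈ Finset.range n, (B i).length ≤ k ∧
          k < ∑ i ∈ Finset.range (n + 1), (B i).length := ⟨N, hk', hk⟩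
      rw [concatSeq, dif_pos hex]
      have hsp := hex.choose_spec
      have hc : hex.choose = N := by
        rcases Nat.lt_trichotomy hex.choose N with h' | h' | h'
        · have h1 : ∑ i ∈ Finset.range (hex.choose + 1), (B i).length ≤
              ∑ i ∈ Finset.range N, (B i).length := S_mono B h'
          exact absurd (lt_of_lt_of_le hsp.2 (le_trans h1 hk')) (lt_irrefl k)
        · exact h'
        · have h1 : ∑ i ∈ Finset.range (N + 1), (B i).length ≤
              ∑ i ∈ Finset.range hex.choose, (B i).length := S_mono B h'
          exact absurd (lt_of_lt_of_le hk (le_trans h1 hsp.1)) (lt_irrefl k)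
      rw [hc, List.range_succ, List.map_append, List.flatten_append]
      rw [List.getD_append_right]
      · rw [flatten_length]; simp
      · rw [flatten_length]; exact hk'

lemma shift_iterate (u : ℕ → Bool) (k n : ℕ) : shift^[k] u n = u (n + k) := by
  induction k generalizing u with
  | zero => simp
  | succ k ih =>
    rw [Function.iterate_succ_apply, ih]
    show u (n + k + 1) = u (n + (k + 1))
    congr 1

theorem stmt2 (a : ℕ → ℕ) (hmono : StrictMono a) (hpos : ∀ n, 0 < a n)
    (hpar : ∀ n, a n % 2 = (n + 1) % 2) :
    blockPt a (fun _ => false) ∈ morseMinimal := by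
  have hx : blockPt a (fun _ => false) =
      concatSeq (fun j => morseBlock (a j)) := by
    unfold blockPt; simp
  set B : ℕ → List Bool := fun j => morseBlock (a j) with hB
  have hPlen : ∀ n, (Pword a n).length = ∑ i ∈ Finset.range (n + 1), (B i).length :=
    fun n => flatten_length B (n + 1)
  have key : ∀ n : ℕ, ∃ k : ℕ, ∀ j, j < (Pword a n).length →
      shift^[k] morse j = blockPt a (fun _ => false) j := by
    intro n
    obtain ⟨t, ht⟩ := Pword_suffix a hmono hpar n
    set K := (morseBlock (a n + 1) ++ t).length with hKdef
    refine ⟨K, fun j hj => ?_⟩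
    have hblock : morseBlock (a n + 2) = (morseBlock (a n + 1) ++ t) ++ Pword a n := by
      rw [show a n + 2 = (a n + 1) + 1 from rfl, morseBlock_succ, ← ht, List.append_assoc]
    have hlen2 : K + (Pword a n).length = 2 ^ (a n + 2) := by
      have h := congrArg List.length hblock
      rw [length_morseBlock, List.length_append] at h
      omega
    rw [shift_iterate, morse_eq (a n + 2) (j + K) (by omega), hblock,
      List.getD_append_right _ _ _ _ (by omega)]
    rw [hx, concatSeq_eq_getD B (n + 1) j (by rw [← hPlen]; exact hj)]
    have : j + K - K = j := by omega
    rw [this]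
    rfl
  choose K hK using key
  have hLlen : ∀ n, n < (Pword a n).length := by
    intro n
    rw [hPlen]
    have h1 : ∀ i ∈ Finset.range (n + 1), 1 ≤ (B i).length := by
      intro i _
      simp only [hB, length_morseBlock]
      exact Nat.one_le_two_pow
    have h2 := Finset.sum_le_sum h1
    simp only [Finset.sum_const, Finset.card_range, smul_eq_mul, mul_one] at h2
    omega
  refine mem_closure_of_tendsto (f := fun n => shift^[K n] morse) (b := atTop) ?_ ?_
  · rw [tendsto_pi_nhds]
    intro j
    refine Tendsto.congr' ?_ tendsto_const_nhds
    filter_upwards [eventually_ge_atTop j] with n hn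
    exact (hK n j (lt_of_le_of_lt hn (hLlen n))).symm
  · exact Eventually.of_forall (fun n => ⟨K n, rfl⟩)
end

section
/- If {a_n} is an increasing sequence of positive integers with lim_{n→∞} a_n / a_{n+1} = 0, then lim_{n→∞} (Σ_{i=1}^{n−1} 2^{a_i}) / 2^{a_n} = 0. -/
open Filter

theorem stmt4 (a : ℕ → ℕ) (hmono : StrictMono a) (hpos : ∀ n, 0 < a n)
    (hratio : Tendsto (fun n => (a n : ℝ) / (a (n + 1) : ℝ)) atTop (nhds 0)) :
    Tendsto (fun n => (∑ i ∈ Finset.range n, (2 : ℝ) ^ (a i)) / 2 ^ (a n)) atTop (nhds 0) := by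
  have hsum : ∀ n, (∑ i ∈ Finset.range (n+1), (2:ℝ)^(a i)) ≤ 2 * 2^(a n) := by
    intro n
    induction n with
    | zero => simp [Finset.sum_range_one]
    | succ n ih =>
      rw [Finset.sum_range_succ]
      have h1 : a n + 1 ≤ a (n+1) := hmono (Nat.lt_succ_self n)
      have h2 : 2 * (2:ℝ)^(a n) ≤ 2^(a (n+1)) := by
        calc 2 * (2:ℝ)^(a n) = 2^(a n + 1) := by ring
        _ ≤ 2^(a (n+1)) := pow_le_pow_right₀ one_le_two h1
      linarith
  -- gaps tend to infinity
  have hgap : Tendsto (fun n => a (n+1) - a n) atTop atTop := by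
    have hev : ∀ᶠ n in atTop, (n : ℕ) ≤ a (n+1) - a n := by
      have h2 := (hratio.eventually (gt_mem_nhds (by norm_num : (0:ℝ) < 1/2)))
      filter_upwards [h2] with n hn
      have hp : (0:ℝ) < (a (n+1) : ℝ) := by exact_mod_cast hpos (n+1)
      rw [div_lt_iff₀ hp] at hn
      have h2a : 2 * a n < a (n+1) := by
        have : (2 * a n : ℝ) < a (n+1) := by push_cast; linarith
        exact_mod_cast this
      have hna : n ≤ a n := hmono.le_apply
      omega
    exact tendsto_atTop_mono' atTop hev tendsto_id
  have hg : Tendsto (fun n => 2 * (1/2:ℝ)^(a (n+1) - a n)) atTop (nhds 0) := by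
    have h := (tendsto_pow_atTop_nhds_zero_of_lt_one (by norm_num : (0:ℝ) ≤ 1/2)
      (by norm_num : (1/2:ℝ) < 1)).comp hgap
    have := h.const_mul 2
    simpa using this
  rw [← tendsto_add_atTop_iff_nat 1]
  apply squeeze_zero (fun n => by positivity) _ hg
  intro n
  have hle : a n ≤ a (n+1) := (hmono (Nat.lt_succ_self n)).le
  have hpow : (2:ℝ)^(a (n+1)) = 2^(a n) * 2^(a (n+1) - a n) := by
    rw [← pow_add]
    congr 1
    omega
  rw [div_le_iff₀ (by positivity)]
  calc ∑ i ∈ Finset.range (n+1), (2:ℝ)^(a i) ≤ 2 * 2^(a n) := hsum n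
  _ = 2 * (1/2:ℝ)^(a (n+1) - a n) * 2^(a (n+1)) := by
      rw [hpow]
      field_simp
      ring_nf
      rw [← mul_pow]
      norm_num
end

section
/- The Morse sequence m contains no block of the form BBb, where B is any nonempty finite word occurring in m and b is the first symbol of B. In particular, m contains no cube BBB. -/
open Filter

/-- The word `L` occurs in the Morse sequence at position `p`. -/
def occursAt (L : List Bool) (p : ℕ) : Prop :=
  ∀ k < L.length, morse (p + k) = L.getD k false

def tm (n : ℕ) : Bool :=
  if h : n = 0 then false else xor (n % 2 == 1) (tm (n / 2))
decreasing_by exact Nat.div_lt_self (Nat.pos_of_ne_zero h) one_lt_two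

lemma tm_zero : tm 0 = false := by rw [tm]; simp

lemma tm_two_mul (n : ℕ) : tm (2 * n) = tm n := by
  rcases eq_or_ne n 0 with rfl | h
  · rw [tm]
  · rw [tm]
    have : 2 * n ≠ 0 := by omega
    simp [this, Nat.mul_mod_right, Nat.mul_div_cancel_left _ (by norm_num : 0 < 2)]

lemma tm_two_mul_add_one (n : ℕ) : tm (2 * n + 1) = !tm n := by
  rw [tm]
  have h1 : (2 * n + 1) % 2 = 1 := by omega
  have h2 : (2 * n + 1) / 2 = n := by omega
  simp [h1, h2]

lemma tm_pow_add : ∀ k r, r < 2 ^ k → tm (2 ^ k + r) = !tm r := by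
  intro k
  induction k with
  | zero =>
    intro r hr
    interval_cases r
    rw [show (2:ℕ)^0 + 0 = 2*0+1 by norm_num, tm_two_mul_add_one]
  | succ k ih =>
    intro r hr
    have hu : r / 2 < 2 ^ k := by
      have := Nat.pow_succ 2 k
      omega
    rcases Nat.even_or_odd r with ⟨u, hru⟩ | ⟨u, hru⟩
    · have h1 : 2 ^ (k+1) + r = 2 * (2 ^ k + u) := by rw [Nat.pow_succ]; omega
      have h2 : r = 2 * u := by omega
      rw [h1, tm_two_mul, ih u (by omega), h2, tm_two_mul]
    · have h1 : 2 ^ (k+1) + r = 2 * (2 ^ k + u) + 1 := by rw [Nat.pow_succ]; omega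
      rw [h1, tm_two_mul_add_one, ih u (by omega), hru, tm_two_mul_add_one, Bool.not_not]

lemma wordCompl_length (l : List Bool) : (wordCompl l).length = l.length := by
  simp [wordCompl]

lemma morseBlock_length (k : ℕ) : (morseBlock k).length = 2 ^ k := by
  induction k with
  | zero => rfl
  | succ k ih => simp [morseBlock, wordCompl_length, ih, Nat.pow_succ]; ring

lemma morseBlock_getD : ∀ k n, n < 2 ^ k → (morseBlock k).getD n false = tm n := by
  intro k
  induction k with
  | zero =>
    intro n hn
    interval_cases n
    simp [morseBlock, tm_zero]
  | succ k ih =>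
    intro n hn
    rw [show morseBlock (k+1) = morseBlock k ++ wordCompl (morseBlock k) from rfl]
    by_cases h : n < 2 ^ k
    · rw [List.getD_append _ _ _ _ (by rw [morseBlock_length]; exact h), ih n h]
    · have hr : n - 2 ^ k < 2 ^ k := by have := Nat.pow_succ 2 k; omega
      have hlen : (morseBlock k).length ≤ n := by rw [morseBlock_length]; omega
      rw [List.getD_append_right _ _ _ _ hlen, morseBlock_length]
      have hrlen : n - 2 ^ k < (morseBlock k).length := by rw [morseBlock_length]; exact hr
      have : (wordCompl (morseBlock k)).getD (n - 2^k) false = !((morseBlock k).getD (n - 2^k) false) := by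
        rw [List.getD_eq_getElem _ _ (by rw [wordCompl_length]; exact hrlen),
            List.getD_eq_getElem _ _ hrlen]
        simp [wordCompl]
      rw [this, ih _ hr, ← tm_pow_add k _ hr]
      congr 1
      omega

lemma morse_eq_tm (n : ℕ) : morse n = tm n := by
  have : n < 2 ^ (n + 1) := by
    calc n < 2 ^ n := Nat.lt_two_pow_self (n := n)
    _ ≤ 2 ^ (n+1) := Nat.pow_le_pow_right (by norm_num) (by omega)
  exact morseBlock_getD (n+1) n this

lemma tm_ne_succ_of_even (m : ℕ) : tm (2 * m) ≠ tm (2 * m + 1) := by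
  rw [tm_two_mul, tm_two_mul_add_one]
  cases tm m <;> simp

lemma odd_of_tm_eq_succ {j : ℕ} (h : tm j = tm (j + 1)) : j % 2 = 1 := by
  rcases Nat.even_or_odd j with ⟨m, hm⟩ | ⟨m, hm⟩
  · exfalso
    apply tm_ne_succ_of_even m
    rw [show 2 * m = j by omega]
    exact h
  · omega

lemma no_aaa (m : ℕ) : ¬ (tm m = tm (m + 1) ∧ tm (m + 1) = tm (m + 2)) := by
  rintro ⟨h1, h2⟩
  have o1 := odd_of_tm_eq_succ h1
  have o2 := odd_of_tm_eq_succ (j := m + 1) h2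
  omega

lemma window5 (j : ℕ) : ∃ i ≤ 3, tm (j + i) = tm (j + i + 1) := by
  by_contra h
  push_neg at h
  -- all adjacent pairs in j..j+4 differ
  have key : ∀ m, 2 * m + 1 ≥ j → 2 * m + 2 ≤ j + 4 → tm m = tm (m + 1) := by
    intro m h1 h2
    have hi : 2 * m + 1 - j ≤ 3 := by omega
    have := h (2 * m + 1 - j) hi
    rw [show j + (2*m+1-j) = 2*m+1 by omega, show 2*m+1+1 = 2*(m+1) by omega] at this
    rw [tm_two_mul_add_one, tm_two_mul] at this
    cases htm : tm m <;> cases htm2 : tm (m+1) <;> simp_all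
  rcases Nat.even_or_odd j with ⟨m, hm⟩ | ⟨m, hm⟩
  · -- j = 2m : odd positions 2m+1, 2m+3
    exact no_aaa m ⟨key m (by omega) (by omega), key (m+1) (by omega) (by omega)⟩
  · -- j = 2m+1
    exact no_aaa m ⟨key m (by omega) (by omega), key (m+1) (by omega) (by omega)⟩

lemma no_overlap : ∀ n, 0 < n → ∀ p, ¬ (∀ i ≤ n, tm (p + i) = tm (p + n + i)) := by
  intro n
  induction n using Nat.strong_induction_on with
  | _ n ih =>
    intro hn p per
    rcases Nat.even_or_odd n with ⟨m, hm⟩ | ⟨m, hm⟩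
    · -- n even, n = 2m (hm : n = m + m)
      have hm1 : 0 < m := by omega
      refine ih m (by omega) hm1 (p / 2) ?_
      intro i hi
      have h2i : 2 * i ≤ n := by omega
      have := per (2 * i) h2i
      rcases Nat.even_or_odd p with ⟨q, hq⟩ | ⟨q, hq⟩
      · rw [show p + 2*i = 2*(q+i) by omega, show p + n + 2*i = 2*(q+i+m) by omega,
            tm_two_mul, tm_two_mul] at this
        rw [show p/2 + i = q + i by omega, show p/2 + m + i = q + i + m by omega]
        exact this
      · rw [show p + 2*i = 2*(q+i)+1 by omega, show p + n + 2*i = 2*(q+i+m)+1 by omega,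
            tm_two_mul_add_one, tm_two_mul_add_one] at this
        rw [show p/2 + i = q + i by omega, show p/2 + m + i = q + i + m by omega]
        simpa using this
    · -- n odd
      rcases eq_or_ne n 1 with rfl | hn1
      · have e1 : tm p = tm (p + 1) := per 0 (by omega)
        have e2 : tm (p + 1) = tm (p + 1 + 1) := per 1 (by omega)
        exact no_aaa p ⟨e1, e2⟩
      have hn3 : 3 ≤ n := by omega
      obtain ⟨i, hi3, hpair⟩ := window5 p
      by_cases hin : i < n
      · -- transfer pair forward
        have e1 := per i (by omega)
        have e2 : tm (p + i + 1) = tm (p + n + i + 1) := per (i + 1) (by omega)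
        have hpair' : tm (p + n + i) = tm (p + n + i + 1) := by
          rw [← e1, hpair, e2]
        have o1 := odd_of_tm_eq_succ (j := p + i) hpair
        have o2 := odd_of_tm_eq_succ (j := p + n + i) hpair'
        omega
      · -- i = n (so n ≤ 3, n odd)
        have hin' : i = n := by omega

        have e1 : tm p = tm (p + n) := per 0 (by omega)
        have e2 : tm (p + 1) = tm (p + n + 1) := per 1 (by omega)
        have hpair0 : tm p = tm (p + 1) := by
          rw [e1, e2, ← hin']
          exact hpair
        have o1 := odd_of_tm_eq_succ (j := p) hpair0
        have o2 := odd_of_tm_eq_succ (j := p + i) hpair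
        omega

lemma no_BBb : ∀ (B : List Bool) (b : Bool), B ≠ [] → B.head? = some b →
    ¬ ∃ p, occursAt (B ++ B ++ [b]) p := by
  rintro B b hB hb ⟨p, hocc⟩
  obtain ⟨t, rfl⟩ : ∃ t, B = b :: t := by
    rcases B with _ | ⟨c, t⟩
    · exact absurd rfl hB
    · simp at hb; exact ⟨t, by rw [hb]⟩
  have hn : (b :: t).length = t.length + 1 := rfl
  have hBB : ((b :: t) ++ (b :: t)).length = (t.length + 1) + (t.length + 1) := by
    simp only [List.length_append, hn]
  have hlen : ((b :: t) ++ (b :: t) ++ [b]).length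
      = (t.length + 1) + (t.length + 1) + 1 := by
    simp only [List.length_append, hn, List.length_cons, List.length_nil]
  refine no_overlap (t.length + 1) (by omega) p ?_
  intro i hi
  have h1 := hocc i (by omega)
  have h2 := hocc (t.length + 1 + i) (by omega)
  rw [← morse_eq_tm, ← morse_eq_tm, h1,
      show p + (t.length + 1) + i = p + (t.length + 1 + i) by omega, h2]
  by_cases hin : i < t.length + 1
  · rw [List.getD_append _ _ _ _ (by omega), List.getD_append _ _ _ _ (by omega),
        List.getD_append _ _ _ _ (by omega),
        List.getD_append_right _ _ _ _ (by omega : (b :: t).length ≤ t.length + 1 + i)]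
    congr 1
    omega
  · have hieq : i = t.length + 1 := by omega
    rw [List.getD_append _ _ _ _ (by omega),
        List.getD_append_right _ _ _ _ (by omega : (b :: t).length ≤ i),
        List.getD_append_right _ _ _ _
          (by omega : ((b :: t) ++ (b :: t)).length ≤ t.length + 1 + i)]
    have e1 : i - (b :: t).length = 0 := by omega
    have e2 : t.length + 1 + i - ((b :: t) ++ (b :: t)).length = 0 := by omega
    rw [e1, e2]
    rfl


theorem stmt8 :
    (∀ (B : List Bool) (b : Bool), B ≠ [] → B.head? = some b →
      ¬ ∃ p, occursAt (B ++ B ++ [b]) p) ∧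
    (∀ B : List Bool, B ≠ [] → ¬ ∃ p, occursAt (B ++ B ++ B) p) := by
  refine ⟨no_BBb, ?_⟩
  rintro B hB ⟨p, hocc⟩
  obtain ⟨b, t, rfl⟩ : ∃ b t, B = b :: t := by
    rcases B with _ | ⟨c, t⟩
    · exact absurd rfl hB
    · exact ⟨c, t, rfl⟩
  refine no_BBb (b :: t) b (by simp) (by simp) ⟨p, ?_⟩
  intro k hk
  have hsplit : (b :: t) ++ (b :: t) ++ (b :: t) = ((b :: t) ++ (b :: t) ++ [b]) ++ t := by
    simp
  have hk' : k < ((b :: t) ++ (b :: t) ++ (b :: t)).length := by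
    simp only [List.length_append, List.length_cons, List.length_nil] at hk ⊢
    omega
  have hval := hocc k hk'
  rw [hval, hsplit, List.getD_append _ _ _ _ hk]
end
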